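/- For all positive integers b and c, writing g = gcd(b,c), b' = b/g and c' = c/g, one has σ_c(ρ̃_b(x)) = g · ρ̃_{b'}(σ_{c'}(x)) for every element x of the group ring ℤ[ℚ/ℤ]. -/

import Mathlib

open scoped Classical

/-- `ℚ/ℤ`, the quotient of the additive group of rationals by the integers. -/
abbrev QZ : Type := ℚ ⧸ AddSubgroup.zmultiples (1 : ℚ)

/-- The group ring `ℤ[ℚ/ℤ]`. -/
abbrev RQZ : Type := AddMonoidAlgebra ℤ QZ

/-- The basis element `e(γ)` of the group ring `ℤ[ℚ/ℤ]`. -/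
noncomputable def e (γ : QZ) : RQZ := AddMonoidAlgebra.single γ 1

/-- `σ` is the ring endomorphism of `ℤ[ℚ/ℤ]` determined by `σ(e γ) = e (n • γ)`. -/
def IsSigma (n : ℕ) (σ : RQZ →+* RQZ) : Prop :=
  ∀ γ : QZ, σ (e γ) = e (n • γ)

/-- `ρ` is the ℤ-linear map of `ℤ[ℚ/ℤ]` determined by
`ρ(e γ) = ∑_{n • γ' = γ} e γ'` (the sum over the fiber of multiplication by `n`). -/
def IsRho (n : ℕ) (ρ : RQZ →ₗ[ℤ] RQZ) : Prop :=
  ∀ γ : QZ, ρ (e γ) = ∑ᶠ γ' ∈ {γ' : QZ | n • γ' = γ}, e γ'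

local notation "π" => (QuotientAddGroup.mk : ℚ → QZ)

lemma mk_eq_mk {x y : ℚ} : (π x) = π y ↔ ∃ m : ℤ, (m : ℚ) = y - x := by
  rw [QuotientAddGroup.eq]
  simp [AddSubgroup.mem_zmultiples_iff, neg_add_eq_sub]

lemma nsmul_mk (n : ℕ) (q : ℚ) : n • (π q) = π (n * q) := by
  simpa [nsmul_eq_mul] using
    (map_nsmul (QuotientAddGroup.mk' (AddSubgroup.zmultiples (1:ℚ))) n q).symm

noncomputable def w (n : ℕ) [NeZero n] (q : ℚ) (k : ZMod n) : QZ :=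
  π ((q + k.val) / n)

lemma w_inj (n : ℕ) [NeZero n] (q : ℚ) : Function.Injective (w n q) := by
  intro k k' h
  rw [w, w] at h
  obtain ⟨m, hm⟩ := mk_eq_mk.1 h
  set a := k.val with ha
  set a' := k'.val with ha'
  have hn : (n:ℚ) ≠ 0 := Nat.cast_ne_zero.2 (NeZero.ne n)
  have hm' : (a' : ℚ) = (a : ℚ) + m * n := by field_simp at hm ⊢; linarith
  have h2 : (a' : ℤ) = a + m * n := by exact_mod_cast hm'
  have h3 : a ≡ a' [MOD n] := (Nat.modEq_iff_dvd).2 ⟨m, by linarith⟩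
  calc k = ((a : ℕ) : ZMod n) := (ZMod.natCast_rightInverse k).symm
    _ = ((a' : ℕ) : ZMod n) := (ZMod.natCast_eq_natCast_iff _ _ _).2 h3
    _ = k' := ZMod.natCast_rightInverse k'

lemma fiber_eq (n : ℕ) [NeZero n] (q : ℚ) :
    {x : QZ | n • x = π q} = Set.range (w n q) := by
  have hn : (n:ℚ) ≠ 0 := Nat.cast_ne_zero.2 (NeZero.ne n)
  ext x
  simp only [Set.mem_setOf_eq, Set.mem_range]
  constructor
  · intro hx
    obtain ⟨r, rfl⟩ := QuotientAddGroup.mk_surjective x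
    rw [nsmul_mk] at hx
    obtain ⟨m, hm⟩ := mk_eq_mk.1 hx
    refine ⟨((-m : ℤ) : ZMod n), ?_⟩
    rw [w, mk_eq_mk]
    have hk : (((((-m : ℤ) : ZMod n).val : ℤ)) : ZMod n) = ((-m : ℤ) : ZMod n) := by
      push_cast [ZMod.natCast_val]
      simp
    obtain ⟨t, ht⟩ := Int.ModEq.dvd ((ZMod.intCast_eq_intCast_iff _ _ _).1 hk)
    refine ⟨t, ?_⟩
    set v := (((-m : ℤ) : ZMod n)).val with hv
    -- ht : -m - v = n * t
    have ht' : (-m : ℚ) - (v : ℚ) = (n : ℚ) * t := by exact_mod_cast ht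
    have hr : (n:ℚ) * r = q - m := by linarith
    field_simp
    linarith
  · rintro ⟨k, rfl⟩
    rw [w, nsmul_mk, mk_eq_mk]
    refine ⟨-(k.val : ℤ), ?_⟩
    set a := k.val
    push_cast
    field_simp
    ring

lemma key (b c : ℕ) (hb : 0 < b) (hc : 0 < c)
    (σc : RQZ →+* RQZ) (ρb : RQZ →ₗ[ℤ] RQZ)
    (σc' : RQZ →+* RQZ) (ρb' : RQZ →ₗ[ℤ] RQZ)
    (hσc : IsSigma c σc) (hρb : IsRho b ρb)
    (hσc' : IsSigma (c / Nat.gcd b c) σc') (hρb' : IsRho (b / Nat.gcd b c) ρb')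
    (γ : QZ) : σc (ρb (e γ)) = (Nat.gcd b c) • ρb' (σc' (e γ)) := by
  obtain ⟨q, rfl⟩ := QuotientAddGroup.mk_surjective γ
  set g := Nat.gcd b c with hg
  set b' := b / g with hb'
  set c' := c / g with hc'
  have hg0 : 0 < g := Nat.gcd_pos_of_pos_left _ hb
  have hbb : g * b' = b := Nat.mul_div_cancel' (Nat.gcd_dvd_left b c)
  have hcc : g * c' = c := Nat.mul_div_cancel' (Nat.gcd_dvd_right b c)
  have hb'0 : 0 < b' := Nat.div_pos (Nat.le_of_dvd hb (Nat.gcd_dvd_left b c)) hg0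
  have hc'0 : 0 < c' := Nat.div_pos (Nat.le_of_dvd hc (Nat.gcd_dvd_right b c)) hg0
  haveI : NeZero b := ⟨hb.ne'⟩
  haveI : NeZero b' := ⟨hb'0.ne'⟩
  have hcop : Nat.Coprime c' b' := (Nat.coprime_div_gcd_div_gcd hg0).symm
  have hdvd : b' ∣ b := Dvd.intro_left g hbb
  -- rewrite both sides as finite sums
  rw [hρb q, fiber_eq b q, finsum_mem_range (w_inj b q), finsum_eq_sum_of_fintype, map_sum]
  rw [hσc' _, nsmul_mk, hρb' _, fiber_eq b' (c' * q), finsum_mem_range (w_inj b' _),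
    finsum_eq_sum_of_fintype]
  -- the comparison map on indices
  set U : ZMod b →+ ZMod b' :=
    (AddMonoidHom.mulLeft ((c' : ℕ) : ZMod b')).comp
      (ZMod.castHom hdvd (ZMod b')).toAddMonoidHom with hU
  have hUapp : ∀ k : ZMod b, U k = ((c' * k.val : ℕ) : ZMod b') := by
    intro k
    show ((c' : ℕ) : ZMod b') * (ZMod.castHom hdvd (ZMod b') k) = _
    rw [ZMod.castHom_apply, ← ZMod.natCast_val k]
    push_cast
    ring
  have husurj : Function.Surjective (U : ZMod b → ZMod b') := by
    intro y
    obtain ⟨n, hn⟩ := ZMod.natCast_zmod_surjective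
      ((((ZMod.unitOfCoprime c' hcop)⁻¹ : (ZMod b')ˣ) : ZMod b') * y)
    refine ⟨(n : ZMod b), ?_⟩
    show ((c' : ℕ) : ZMod b') * (ZMod.castHom hdvd (ZMod b') (n : ZMod b)) = y
    rw [map_natCast, hn]
    rw [← ZMod.coe_unitOfCoprime c' hcop, ← mul_assoc, ← Units.val_mul, mul_inv_cancel,
      Units.val_one, one_mul]
  -- each term of the LHS sum matches
  have hterm : ∀ k : ZMod b, σc (e (w b q k)) = e (w b' (c' * q) (U k)) := by
    intro k
    rw [hσc]
    congr 1
    rw [w, w, nsmul_mk, mk_eq_mk]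
    set a := k.val with ha
    have hval : (U k).val = (c' * a) % b' := by rw [hUapp, ZMod.val_natCast]
    refine ⟨-((c' * a / b' : ℕ) : ℤ), ?_⟩
    have hdmq : (b' : ℚ) * ((c' * a / b' : ℕ) : ℚ) + (((c' * a) % b' : ℕ) : ℚ)
        = (c' : ℚ) * (a : ℚ) := by exact_mod_cast Nat.div_add_mod (c' * a) b'
    have hbq : (b : ℚ) = (g : ℚ) * b' := by exact_mod_cast hbb.symm
    have hcq : (c : ℚ) = (g : ℚ) * c' := by exact_mod_cast hcc.symm
    have hb'ne : (b' : ℚ) ≠ 0 := Nat.cast_ne_zero.2 hb'0.ne'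
    have hgne : (g : ℚ) ≠ 0 := Nat.cast_ne_zero.2 hg0.ne'
    rw [hval, hbq, hcq, Int.cast_neg, Int.cast_natCast]
    field_simp
    linear_combination (-1 : ℚ) * hdmq
  simp_rw [hterm]
  -- regroup the sum along the fibers of U
  rw [Finset.sum_comp (fun j => e (w b' (c' * q) j)) (U : ZMod b → ZMod b')]
  rw [Finset.image_univ_of_surjective husurj]
  -- all fibers have the same cardinality, namely g
  have hfib : ∀ j : ZMod b', (Finset.univ.filter (fun a => U a = j)).card = g := by
    have hsame : ∀ j : ZMod b',
        (Finset.univ.filter (fun a => U a = j)).card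
          = (Finset.univ.filter (fun a => U a = 0)).card := by
      intro j
      have := AddMonoidHom.card_fiber_eq_of_mem_range U (husurj j) ⟨0, map_zero U⟩
      simpa using this
    have hcount : b = b' * (Finset.univ.filter (fun a : ZMod b => U a = 0)).card := by
      have h1 : b = ∑ j : ZMod b', (Finset.univ.filter (fun a => U a = j)).card := by
        have h0 : (Finset.univ : Finset (ZMod b)).card
            = ∑ j : ZMod b', (Finset.univ.filter (fun a => U a = j)).card :=
          Finset.card_eq_sum_card_fiberwise (fun x _ => Finset.mem_univ _)
        rwa [Finset.card_univ, ZMod.card] at h0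
      have h2 : ∑ j : ZMod b', (Finset.univ.filter (fun a => U a = j)).card
          = b' * (Finset.univ.filter (fun a : ZMod b => U a = 0)).card := by
        rw [Finset.sum_congr rfl (fun j _ => hsame j), Finset.sum_const, Finset.card_univ,
          ZMod.card, smul_eq_mul]
      exact h1.trans h2
    intro j
    rw [hsame j]
    have h3 : b' * g = b' * (Finset.univ.filter (fun a : ZMod b => U a = 0)).card := by
      rw [mul_comm b' g, hbb]; exact hcount
    exact (Nat.eq_of_mul_eq_mul_left hb'0 h3).symm
  simp_rw [hfib]
  rw [← Finset.smul_sum]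

theorem sigma_rho_gcd (b c : ℕ) (hb : 0 < b) (hc : 0 < c)
    (σc : RQZ →+* RQZ) (ρb : RQZ →ₗ[ℤ] RQZ)
    (σc' : RQZ →+* RQZ) (ρb' : RQZ →ₗ[ℤ] RQZ)
    (hσc : IsSigma c σc) (hρb : IsRho b ρb)
    (hσc' : IsSigma (c / Nat.gcd b c) σc') (hρb' : IsRho (b / Nat.gcd b c) ρb') :
    ∀ x : RQZ, σc (ρb x) = (Nat.gcd b c) • ρb' (σc' x) := by
  intro x
  induction x using AddMonoidAlgebra.induction_linear with
  | zero => simp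
  | add f f' hf hf' => simp only [map_add, hf, hf', smul_add]
  | single γ z =>
      have hz : (AddMonoidAlgebra.single γ z : RQZ) = z • e γ := by
        rw [e]
        rw [AddMonoidAlgebra.smul_single, smul_eq_mul, mul_one]
      rw [hz, map_zsmul ρb, map_zsmul σc, map_zsmul σc', map_zsmul ρb',
        key b c hb hc σc ρb σc' ρb' hσc hρb hσc' hρb' γ, smul_comm]
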